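/- Pick an integer t ≥ 0 and positive integers r, v, k, ℓ, and put s := gcd(q−1, v), d := (q−1)/s, and d_0 := d/gcd(d, ℓ−1). Suppose q = q_0^m where m is even, q_0 is a prime power, and q_0 ≡ −1 (mod d). Pick a polynomial ĥ with coefficients in the subfield F_{q_0} of F_q of order q_0, and let h := h_k(x)^t · ĥ(h_ℓ(x)^{d_0}). Then f(x) := x^r · h(x^v) is a permutation polynomial of F_q if and only if gcd(r, s) = 1, gcd(2r + (k−1)tv, 2d) = 2, and h has no roots in μ_d. -/

import Mathlib

open Polynomial

private lemma aux_reflect {F : Type*} [Field F] (a : Fˣ) (n : ℕ) :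
    (∑ i ∈ Finset.range n, (((a⁻¹ : Fˣ) : F)) ^ i) * ((a : F)) ^ (n - 1)
      = ∑ i ∈ Finset.range n, ((a : F)) ^ i := by
  rcases Nat.eq_zero_or_pos n with rfl | hn
  · simp
  rw [Finset.sum_mul, ← Finset.sum_range_reflect (fun i => ((a : F)) ^ i) n]
  refine Finset.sum_congr rfl fun i hi => ?_
  rw [Finset.mem_range] at hi
  have hi' : i ≤ n - 1 := by omega
  have ha : (a : F) ≠ 0 := a.ne_zero
  rw [Units.val_inv_eq_inv_val, inv_pow, ← pow_sub_mul_pow (a : F) hi',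
    mul_comm ((a : F) ^ (n - 1 - i)) _, inv_mul_cancel_left₀ (pow_ne_zero _ ha)]

private lemma aux_count {F : Type*} [Field F] [Fintype F] [DecidableEq F] (n : ℕ) (hn : 0 < n) :
    (Finset.univ.filter fun c : F => c ^ n = 1).card = Nat.gcd n (Fintype.card F - 1) := by
  have hq1 : 0 < Fintype.card F - 1 := by
    have := Fintype.one_lt_card (α := F); omega
  set g := Nat.gcd n (Fintype.card F - 1) with hg
  have hgpos : 0 < g := Nat.gcd_pos_of_pos_left _ hn
  have hgdvd : g ∣ Fintype.card F - 1 := Nat.gcd_dvd_right _ _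
  -- a primitive g-th root of unity
  obtain ⟨g₀, hg₀⟩ := IsCyclic.exists_generator (α := Fˣ)
  have hord : orderOf g₀ = Fintype.card F - 1 := by
    rw [orderOf_eq_card_of_forall_mem_zpowers hg₀, Nat.card_eq_fintype_card,
      Fintype.card_units]
  have hdvd2 : (Fintype.card F - 1) / g ∣ Fintype.card F - 1 := Nat.div_dvd_of_dvd hgdvd
  have hordz : orderOf (g₀ ^ ((Fintype.card F - 1) / g)) = g := by
    rw [orderOf_pow, hord, Nat.gcd_eq_right hdvd2, Nat.div_div_self hgdvd (by omega)]
  have hprim : IsPrimitiveRoot ((g₀ ^ ((Fintype.card F - 1) / g) : Fˣ) : F) g := by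
    have h1 := IsPrimitiveRoot.orderOf (g₀ ^ ((Fintype.card F - 1) / g))
    rw [hordz] at h1
    exact IsPrimitiveRoot.coe_units_iff.mpr h1
  have hset : (Finset.univ.filter fun c : F => c ^ n = 1) = nthRootsFinset g (1 : F) := by
    ext c
    simp only [Finset.mem_filter, Finset.mem_univ, true_and, mem_nthRootsFinset hgpos]
    constructor
    · intro hc
      have hc0 : c ≠ 0 := by
        intro h0; rw [h0, zero_pow hn.ne'] at hc; exact zero_ne_one hc
      have h1 : orderOf c ∣ n := orderOf_dvd_iff_pow_eq_one.mpr hc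
      have h2 : orderOf c ∣ Fintype.card F - 1 :=
        orderOf_dvd_iff_pow_eq_one.mpr (FiniteField.pow_card_sub_one_eq_one c hc0)
      exact orderOf_dvd_iff_pow_eq_one.mp (Nat.dvd_gcd h1 h2)
    · intro hc
      obtain ⟨w, hw⟩ : g ∣ n := Nat.gcd_dvd_left _ _
      rw [hw, pow_mul, hc, one_pow]
  rw [hset, hprim.card_nthRootsFinset]

private lemma aux_pow_surj {F : Type*} [Field F] [Fintype F] [DecidableEq F] (s d : ℕ)
    (hsd : s * d = Fintype.card F - 1) (ω : Fˣ) (hω : ω ^ d = 1) :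
    ∃ x : Fˣ, x ^ s = ω := by
  have hq1 : 0 < Fintype.card F - 1 := by
    have := Fintype.one_lt_card (α := F); omega
  have hdpos : 0 < d := by
    rcases Nat.eq_zero_or_pos d with rfl | h; · simp at hsd; omega
    · exact h
  obtain ⟨g₀, hg₀⟩ := IsCyclic.exists_generator (α := Fˣ)
  have hord : orderOf g₀ = Fintype.card F - 1 := by
    rw [orderOf_eq_card_of_forall_mem_zpowers hg₀, Nat.card_eq_fintype_card,
      Fintype.card_units]
  obtain ⟨z, hz⟩ := Subgroup.mem_zpowers_iff.mp (hg₀ ω)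
  have hzd : g₀ ^ (z * d) = 1 := by
    rw [zpow_mul, hz]
    norm_cast
  have hdvd : (orderOf g₀ : ℤ) ∣ z * d := orderOf_dvd_iff_zpow_eq_one.mpr hzd
  rw [hord, ← hsd] at hdvd
  have hsz : (s : ℤ) ∣ z := by
    have h2 : (s : ℤ) * d ∣ z * d := by exact_mod_cast hdvd
    exact (mul_dvd_mul_iff_right (by exact_mod_cast hdpos.ne' : (d : ℤ) ≠ 0)).mp h2
  obtain ⟨z', hz'⟩ := hsz
  refine ⟨g₀ ^ z', ?_⟩
  rw [← zpow_natCast (g₀ ^ z') s, ← zpow_mul, mul_comm, ← hz', hz]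

set_option maxHeartbeats 1000000 in
/-- Pick t ≥ 0 and r, v, k, ℓ > 0; put s := gcd(q−1, v), d := (q−1)/s,
d_0 := d/gcd(d, ℓ−1). Suppose q = q_0^m with m even, q_0 a prime power,
q_0 ≡ −1 (mod d). Pick hhat with coefficients in the subfield of order q_0, and let
h := h_k^t · hhat(h_ℓ^{d_0}). Then f := x^r h(x^v) permutes F_q iff gcd(r, s) = 1,
gcd(2r + (k−1)tv, 2d) = 2, and h has no roots in μ_d. -/
theorem stmt_4 {F : Type*} [Field F] [Fintype F] {q q0 m : ℕ}
    (hq : Fintype.card F = q) (t : ℕ) {r v k ℓ : ℕ}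
    (hr : 0 < r) (hv : 0 < v) (hk : 0 < k) (hl : 0 < ℓ)
    (s d d0 : ℕ) (hs : s = Nat.gcd (q - 1) v) (hd : d = (q - 1) / s)
    (hd0 : d0 = d / Nat.gcd d (ℓ - 1))
    (hq0 : IsPrimePow q0) (hqm : q = q0 ^ m) (hme : Even m) (hcong : d ∣ q0 + 1)
    (K : Subfield F) (hK : Nat.card K = q0)
    (hhat : F[X]) (hcoeff : ∀ i, hhat.coeff i ∈ K)
    (h : F[X]) (hh : h = (∑ i ∈ Finset.range k, X ^ i) ^ t *
      hhat.comp ((∑ i ∈ Finset.range ℓ, X ^ i) ^ d0)) :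
    Function.Bijective (fun c : F => (X ^ r * h.comp (X ^ v)).eval c) ↔
      (Nat.gcd r s = 1 ∧ Nat.gcd (2 * r + (k - 1) * t * v) (2 * d) = 2 ∧
        ∀ ζ : AlgebraicClosure F, ζ ^ d = 1 →
          (h.map (algebraMap F (AlgebraicClosure F))).eval ζ ≠ 0) := by
  classical
  -- ## basic numerology
  have hq2 : 2 ≤ q := hq ▸ Fintype.one_lt_card
  have hq1 : 0 < q - 1 := by omega
  have hm0 : m ≠ 0 := by rintro rfl; rw [pow_zero] at hqm; omega
  have hq0_2 : 2 ≤ q0 := hq0.two_le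
  obtain ⟨m2, hm2⟩ := hme
  have hm2' : m = 2 * m2 := by omega
  set S := ∑ i ∈ Finset.range m2, (q0 ^ 2) ^ i with hS
  obtain ⟨j, hj⟩ := hcong
  have hjpos : 0 < j := by
    rcases Nat.eq_zero_or_pos j with rfl | hj'
    · rw [mul_zero] at hj; omega
    · exact hj'
  have hsdvd : s ∣ q - 1 := by rw [hs]; exact Nat.gcd_dvd_left _ _
  have hsd : s * d = q - 1 := by rw [hd, Nat.mul_div_cancel' hsdvd]
  have hspos : 0 < s := Nat.pos_of_ne_zero fun h0 => by rw [h0, zero_mul] at hsd; omega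
  have hdpos : 0 < d := Nat.pos_of_ne_zero fun h0 => by rw [h0, mul_zero] at hsd; omega
  have hqS : (q0 - 1) * ((q0 + 1) * S) = q - 1 := by
    zify [show 1 ≤ q0 by omega, show 1 ≤ q by omega]
    have hSc : ((S : ℕ) : ℤ) = ∑ i ∈ Finset.range m2, (((q0 : ℤ)) ^ 2) ^ i := by
      rw [hS]; push_cast; ring
    rw [hSc]
    have hgeo := geom_sum_mul ((q0 : ℤ) ^ 2) m2
    have hqz : ((q0 : ℤ)) ^ (2 * m2) = (q : ℤ) := by
      rw [← hm2']
      have : ((q0 ^ m : ℕ) : ℤ) = ((q : ℕ) : ℤ) := by rw [← hqm]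
      push_cast at this
      exact this
    calc ((q0 : ℤ) - 1) * (((q0 : ℤ) + 1) * ∑ i ∈ Finset.range m2, (((q0 : ℤ)) ^ 2) ^ i)
        = (∑ i ∈ Finset.range m2, (((q0 : ℤ)) ^ 2) ^ i) * ((q0 : ℤ) ^ 2 - 1) := by ring
      _ = ((q0 : ℤ) ^ 2) ^ m2 - 1 := hgeo
      _ = (q : ℤ) - 1 := by rw [← pow_mul, hqz]
  have hs_eq : s = (q0 - 1) * (j * S) := by
    apply Nat.eq_of_mul_eq_mul_left hdpos
    calc d * s = s * d := by ring
      _ = q - 1 := hsd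
      _ = (q0 - 1) * ((q0 + 1) * S) := hqS.symm
      _ = (q0 - 1) * ((d * j) * S) := by rw [← hj]
      _ = d * ((q0 - 1) * (j * S)) := by ring
  have hsv : s ∣ v := by rw [hs]; exact Nat.gcd_dvd_right _ _
  set e := v / s with he
  have hv_es : v = s * e := (Nat.mul_div_cancel' hsv).symm
  have hed : Nat.gcd e d = 1 := by
    have h1 : Nat.gcd (s * e) (s * d) = s := by
      rw [← hv_es, hsd, ← Nat.gcd_comm, ← hs]
    rw [Nat.gcd_mul_left] at h1
    exact Nat.eq_of_mul_eq_mul_left hspos (by rw [h1, mul_one])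
  set c₀ := (k - 1) * (t * (j * S)) with hc₀
  have hdl : d ∣ (ℓ - 1) * d0 := by
    have hg1 : Nat.gcd d (ℓ - 1) ∣ d := Nat.gcd_dvd_left _ _
    have hg2 : Nat.gcd d (ℓ - 1) ∣ (ℓ - 1) := Nat.gcd_dvd_right _ _
    obtain ⟨a, hA⟩ := hg2
    refine ⟨a, ?_⟩
    calc (ℓ - 1) * d0 = (Nat.gcd d (ℓ - 1) * a) * (d / Nat.gcd d (ℓ - 1)) := by
          rw [← hA, hd0]
      _ = a * (Nat.gcd d (ℓ - 1) * (d / Nat.gcd d (ℓ - 1))) := by ring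
      _ = a * d := by rw [Nat.mul_div_cancel' hg1]
      _ = d * a := by ring
  -- ## characteristic and Frobenius
  set p := ringChar F with hpdef
  haveI : CharP F p := ringChar.charP F
  obtain ⟨nn, hpprime, hcard⟩ := FiniteField.card F p
  have hq_pn : q = p ^ (nn : ℕ) := by rw [← hq, hcard]
  have hq0dvd : q0 ∣ q := by rw [hqm]; exact dvd_pow_self q0 hm0
  obtain ⟨a, ha_le, hq0a⟩ := (Nat.dvd_prime_pow hpprime).mp (hq_pn ▸ hq0dvd)
  haveI : Fact p.Prime := ⟨hpprime⟩
  haveI hexp : ExpChar F p := ExpChar.prime hpprime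
  set φ₀ := iterateFrobenius F p a with hφ₀
  have hφ : ∀ x : F, φ₀ x = x ^ q0 := fun x => by
    rw [hφ₀, iterateFrobenius_def, ← hq0a]
  have hKfix : ∀ z : F, z ∈ K → z ^ q0 = z := by
    intro z hz
    haveI : Fintype K := Fintype.ofFinite K
    have h1 : Fintype.card K = q0 := by rw [← Nat.card_eq_fintype_card, hK]
    have h2 := FiniteField.pow_card (⟨z, hz⟩ : K)
    rw [h1] at h2
    have h4 := congrArg Subtype.val h2
    push_cast at h4
    exact h4
  have hmap : hhat.map φ₀ = hhat := by
    ext i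
    rw [coeff_map, hφ, hKfix _ (hcoeff i)]
  have heval : ∀ x : F, eval x h =
      (∑ i ∈ Finset.range k, x ^ i) ^ t
        * eval ((∑ i ∈ Finset.range ℓ, x ^ i) ^ d0) hhat := by
    intro x
    rw [hh, eval_mul, eval_pow, eval_geom_sum, eval_comp, eval_pow, eval_geom_sum]
  -- ## the key identity on μ_d
  have KI : ∀ η : Fˣ, (η : F) ^ d = 1 → eval (η : F) h ≠ 0 →
      (eval (η : F) h) ^ s * (η : F) ^ c₀ = 1 := by
    intro η hηd hne
    have hηdU : η ^ d = 1 :=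
      Units.ext (by rw [Units.val_pow_eq_pow_val, Units.val_one]; exact hηd)
    have hη1 : η ^ (q0 + 1) = 1 := by rw [hj, pow_mul, hηdU, one_pow]
    have hηinv : η ^ q0 = η⁻¹ := by
      have h3 : η ^ q0 * η = 1 := by rw [← pow_succ]; exact hη1
      exact mul_eq_one_iff_eq_inv.mp h3
    have hηq0 : (η : F) ^ q0 = ((η⁻¹ : Fˣ) : F) := by
      rw [← Units.val_pow_eq_pow_val, hηinv]
    have hrefl_ℓ := aux_reflect η ℓ
    have hφzℓ : φ₀ (∑ i ∈ Finset.range ℓ, (η : F) ^ i)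
        = ∑ i ∈ Finset.range ℓ, ((η⁻¹ : Fˣ) : F) ^ i := by
      rw [map_sum]
      exact Finset.sum_congr rfl fun i _ => by rw [map_pow, hφ, hηq0]
    have hηl1 : ((η : F) ^ (ℓ - 1)) ^ d0 = 1 := by
      rw [← pow_mul]
      obtain ⟨a', ha'⟩ := hdl
      rw [ha', pow_mul, hηd, one_pow]
    have hufix : φ₀ ((∑ i ∈ Finset.range ℓ, (η : F) ^ i) ^ d0)
        = (∑ i ∈ Finset.range ℓ, (η : F) ^ i) ^ d0 := by
      rw [map_pow, hφzℓ]
      conv_rhs => rw [← hrefl_ℓ]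
      rw [mul_pow, hηl1, mul_one]
    set u := (∑ i ∈ Finset.range ℓ, (η : F) ^ i) ^ d0 with hu'
    set w := eval u hhat with hwdef
    have hwfix : w ^ q0 = w := by
      have h1 : φ₀ w = w := by
        rw [hwdef, ← eval₂_at_apply φ₀ u, ← eval_map φ₀, hmap, hufix]
      rw [← hφ]; exact h1
    have hevalη : eval (η : F) h = (∑ i ∈ Finset.range k, (η : F) ^ i) ^ t * w :=
      heval (η : F)
    have hw0 : w ≠ 0 := fun h0 => hne (by rw [hevalη, h0, mul_zero])
    have hwq : w ^ (q0 - 1) = 1 := by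
      have h2 : w ^ (q0 - 1) * w = 1 * w := by
        rw [one_mul, ← pow_succ, show q0 - 1 + 1 = q0 by omega, hwfix]
      exact mul_right_cancel₀ hw0 h2
    have hws : w ^ s = 1 := by rw [hs_eq, pow_mul, hwq, one_pow]
    rcases Nat.eq_zero_or_pos t with rfl | ht
    · have hc0 : c₀ = 0 := by rw [hc₀]; ring
      rw [hevalη, hc0, pow_zero, one_mul, pow_zero, mul_one, hws]
    · set z := ∑ i ∈ Finset.range k, (η : F) ^ i with hzdef
      have hz0 : z ≠ 0 := fun h0 => hne (by rw [hevalη, h0, zero_pow ht.ne', zero_mul])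
      have hrefl_k := aux_reflect η k
      have hφz : z ^ q0 = ∑ i ∈ Finset.range k, ((η⁻¹ : Fˣ) : F) ^ i := by
        rw [← hφ, hzdef, map_sum]
        exact Finset.sum_congr rfl fun i _ => by rw [map_pow, hφ, hηq0]
      have hkey : z ^ (q0 - 1) * (η : F) ^ (k - 1) = 1 := by
        have h3 : (z ^ (q0 - 1) * (η : F) ^ (k - 1)) * z = 1 * z := by
          rw [one_mul]
          calc (z ^ (q0 - 1) * (η : F) ^ (k - 1)) * z
              = (z ^ (q0 - 1) * z) * (η : F) ^ (k - 1) := by ring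
            _ = z ^ q0 * (η : F) ^ (k - 1) := by
                rw [← pow_succ, show q0 - 1 + 1 = q0 by omega]
            _ = z := by rw [hφz, hrefl_k]
        exact mul_right_cancel₀ hz0 h3
      have hkey2 : z ^ ((q0 - 1) * (t * (j * S)))
          * (η : F) ^ ((k - 1) * (t * (j * S))) = 1 := by
        have h4 := congrArg (· ^ (t * (j * S))) hkey
        simpa only [mul_pow, ← pow_mul, one_pow] using h4
      rw [hevalη]
      calc ((z ^ t * w) ^ s) * (η : F) ^ c₀
          = (z ^ (t * s) * (η : F) ^ c₀) * w ^ s := by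
            rw [mul_pow, ← pow_mul]; ring
        _ = 1 := by
            rw [hws, mul_one]
            have hts : t * s = (q0 - 1) * (t * (j * S)) := by rw [hs_eq]; ring
            rw [hts, hc₀]
            exact hkey2
  -- ## the simplified map and its power identity
  have hfeq : (fun c : F => eval c (X ^ r * h.comp (X ^ v)))
      = fun c : F => c ^ r * eval (c ^ v) h := by
    funext c
    rw [eval_mul, eval_pow, eval_X, eval_comp, eval_pow, eval_X]
  have hvd1 : ∀ x : F, x ≠ 0 → (x ^ v) ^ d = 1 := by
    intro x hx
    have h1 : x ^ (q - 1) = 1 := by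
      rw [← hq]; exact FiniteField.pow_card_sub_one_eq_one x hx
    rw [← pow_mul, show v * d = (q - 1) * e by rw [hv_es, ← hsd]; ring, pow_mul, h1, one_pow]
  have hf0 : (0 : F) ^ r * eval ((0 : F) ^ v) h = 0 := by
    rw [zero_pow hr.ne', zero_mul]
  have fkey : (∀ η : F, η ^ d = 1 → eval η h ≠ 0) → ∀ x : F, x ≠ 0 →
      (x ^ r * eval (x ^ v) h) ^ s = x ^ (s * (r + (d - (c₀ * e) % d))) := by
    intro hNV x hx
    have hc1lt : (c₀ * e) % d < d := Nat.mod_lt _ hdpos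
    have hKIx : (eval (x ^ v) h) ^ s * (x ^ v) ^ c₀ = 1 := by
      have hxu : x ^ v = ((Units.mk0 x hx ^ v : Fˣ) : F) := by
        rw [Units.val_pow_eq_pow_val]; rfl
      rw [hxu]
      exact KI _ (by rw [← hxu]; exact hvd1 x hx) (by rw [← hxu]; exact hNV _ (hvd1 x hx))
    have e1 : (x ^ r * eval (x ^ v) h) ^ s * x ^ (v * c₀) = x ^ (r * s) := by
      calc (x ^ r * eval (x ^ v) h) ^ s * x ^ (v * c₀)
          = (x ^ r) ^ s * ((eval (x ^ v) h) ^ s * (x ^ v) ^ c₀) := by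
            rw [mul_pow, ← pow_mul]; ring
        _ = x ^ (r * s) := by rw [hKIx, mul_one, ← pow_mul]
    have hA : s * (r + (d - (c₀ * e) % d)) + v * c₀ = r * s + (s * d) * (1 + c₀ * e / d) := by
      rw [hv_es]
      have h5 : d * (c₀ * e / d) + (c₀ * e) % d = c₀ * e := Nat.div_add_mod _ _
      zify [le_of_lt hc1lt]
      zify at h5
      linear_combination (-(s : ℤ)) * h5
    have e2 : x ^ (s * (r + (d - (c₀ * e) % d))) * x ^ (v * c₀) = x ^ (r * s) := by
      have hx1 : x ^ (q - 1) = 1 := by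
        rw [← hq]; exact FiniteField.pow_card_sub_one_eq_one x hx
      rw [← pow_add, hA, hsd, pow_add, pow_mul, pow_mul, hx1, one_pow, mul_one]
    exact mul_right_cancel₀ (pow_ne_zero (v * c₀) hx) (e1.trans e2.symm)
  -- ## transfer of the nonvanishing condition from the algebraic closure
  have htrans : (∀ ζ : AlgebraicClosure F, ζ ^ d = 1 →
      (h.map (algebraMap F (AlgebraicClosure F))).eval ζ ≠ 0) ↔
      (∀ η : F, η ^ d = 1 → eval η h ≠ 0) := by
    set φ := algebraMap F (AlgebraicClosure F) with hφA
    have hφinj : Function.Injective φ := φ.injective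
    have hem : ∀ a : F, eval (φ a) (h.map φ) = φ (eval a h) := fun a => by
      rw [eval_map, eval₂_at_apply]
    constructor
    · intro H η hη hcontr
      exact H (φ η) (by rw [← map_pow, hη, map_one]) (by rw [hem, hcontr, map_zero])
    · intro H ζ hζ
      have hζq : ζ ^ (q - 1) = 1 := by
        rw [show q - 1 = d * s by rw [← hsd]; ring, pow_mul, hζ, one_pow]
      set A := (Finset.univ : Finset Fˣ).image (fun u : Fˣ => φ (u : F)) with hA
      have hinj2 : Function.Injective (fun u : Fˣ => φ (u : F)) := fun u1 u2 h12 =>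
        Units.ext (hφinj h12)
      have hAcard : A.card = q - 1 := by
        rw [hA, Finset.card_image_of_injective _ hinj2, Finset.card_univ,
          Fintype.card_units, hq]
      have hsub : A ⊆ nthRootsFinset (q - 1) (1 : AlgebraicClosure F) := by
        intro x hx
        rw [hA, Finset.mem_image] at hx
        obtain ⟨u, _, rfl⟩ := hx
        rw [mem_nthRootsFinset hq1, ← map_pow]
        rw [show (u : F) ^ (q - 1) = 1 by
          rw [← hq]; exact FiniteField.pow_card_sub_one_eq_one _ u.ne_zero, map_one]
      have hcard2 : (nthRootsFinset (q - 1) (1 : AlgebraicClosure F)).card ≤ q - 1 := by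
        rw [nthRootsFinset_def (q - 1) (1 : AlgebraicClosure F)]
        exact le_trans (Multiset.toFinset_card_le _) (card_nthRoots _ _)
      have hAeq : A = nthRootsFinset (q - 1) (1 : AlgebraicClosure F) :=
        Finset.eq_of_subset_of_card_le hsub (le_trans hcard2 hAcard.ge)
      have hζA : ζ ∈ A := by rw [hAeq]; exact (mem_nthRootsFinset hq1 _).mpr hζq
      rw [hA, Finset.mem_image] at hζA
      obtain ⟨u, _, rfl⟩ := hζA
      have hud : (u : F) ^ d = 1 := by
        apply hφinj
        rw [map_pow, hζ, map_one]
      rw [hem]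
      intro h0
      exact H (u : F) hud (hφinj (by rw [h0, map_zero]))
  -- ## bijectivity forces nonvanishing on μ_d
  have hNV_of_bij : Function.Bijective (fun c : F => c ^ r * eval (c ^ v) h) →
      (∀ η : F, η ^ d = 1 → eval η h ≠ 0) := by
    intro hbij η hη hcontr
    have hη0 : η ≠ 0 := by
      intro h0; rw [h0, zero_pow hdpos.ne'] at hη; exact zero_ne_one hη
    set ηu := Units.mk0 η hη0 with hηu
    have hηuD : ηu ^ d = 1 := Units.ext (by
      rw [Units.val_pow_eq_pow_val, Units.val_one]; exact hη)
    -- the e-th power map is a bijection of μ_d  (gcd (e, d) = 1)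
    set Γ := Finset.univ.filter (fun ω : Fˣ => ω ^ d = 1) with hΓ
    have hsurj := Finset.surj_on_of_inj_on_of_card_le
      (s := Γ) (t := Γ) (fun ω _ => ω ^ e)
      (fun ω hω => by
        show ω ^ e ∈ Γ
        rw [hΓ, Finset.mem_filter] at hω ⊢
        exact ⟨Finset.mem_univ _, by rw [← pow_mul, mul_comm, pow_mul, hω.2, one_pow]⟩)
      (fun ω1 ω2 hω1 hω2 h12 => by
        have h12' : ω1 ^ e = ω2 ^ e := h12
        rw [hΓ, Finset.mem_filter] at hω1 hω2
        have hu1 : (ω1⁻¹ * ω2) ^ e = 1 := by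
          rw [mul_pow, inv_pow, h12', inv_mul_cancel]
        have hu2 : (ω1⁻¹ * ω2) ^ d = 1 := by
          rw [mul_pow, inv_pow, hω1.2, hω2.2, inv_one, one_mul]
        have ho : orderOf (ω1⁻¹ * ω2) ∣ 1 := by
          rw [← hed]
          exact Nat.dvd_gcd (orderOf_dvd_iff_pow_eq_one.mpr hu1)
            (orderOf_dvd_iff_pow_eq_one.mpr hu2)
        have : ω1⁻¹ * ω2 = 1 := orderOf_eq_one_iff.mp (Nat.dvd_one.mp ho)
        exact (inv_mul_eq_one.mp this)) (le_refl _)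
    have hηuΓ : ηu ∈ Γ := by rw [hΓ, Finset.mem_filter]; exact ⟨Finset.mem_univ _, hηuD⟩
    obtain ⟨ζ, hζΓ, hζe⟩ := hsurj ηu hηuΓ
    rw [hΓ, Finset.mem_filter] at hζΓ
    obtain ⟨x, hx⟩ := aux_pow_surj s d (by rw [hq]; exact hsd) ζ hζΓ.2
    have hζe' : ηu = ζ ^ e := hζe
    have hxv : ((x : F)) ^ v = η := by
      have : x ^ v = ηu := by rw [hv_es, pow_mul, hx, ← hζe']
      rw [← Units.val_pow_eq_pow_val, this, hηu]; rfl
    have hfx : ((x : F)) ^ r * eval (((x : F)) ^ v) h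
        = (0 : F) ^ r * eval ((0 : F) ^ v) h := by
      rw [hxv, hcontr, mul_zero, hf0]
    have := hbij.injective hfx
    exact x.ne_zero this
  -- ## bijectivity forces gcd (r, s) = 1
  have hgcd_rs_of_inj : Function.Injective (fun c : F => c ^ r * eval (c ^ v) h) →
      Nat.gcd r s = 1 := by
    intro hinj
    have hg'dvd : Nat.gcd r s ∣ q - 1 := dvd_trans (Nat.gcd_dvd_right r s) hsdvd
    obtain ⟨g₀, hg₀⟩ := IsCyclic.exists_generator (α := Fˣ)
    have hord : orderOf g₀ = q - 1 := by
      rw [orderOf_eq_card_of_forall_mem_zpowers hg₀, Nat.card_eq_fintype_card,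
        Fintype.card_units, hq]
    set ω := g₀ ^ ((q - 1) / Nat.gcd r s) with hω
    have hωord : orderOf ω = Nat.gcd r s := by
      rw [hω, orderOf_pow, hord, Nat.gcd_eq_right (Nat.div_dvd_of_dvd hg'dvd),
        Nat.div_div_self hg'dvd (by omega)]
    have hωr : (ω : F) ^ r = 1 := by
      have h1 : ω ^ r = 1 :=
        orderOf_dvd_iff_pow_eq_one.mp (hωord ▸ Nat.gcd_dvd_left r s)
      rw [← Units.val_pow_eq_pow_val, h1, Units.val_one]
    have hωv : (ω : F) ^ v = 1 := by
      have h1 : ω ^ v = 1 := orderOf_dvd_iff_pow_eq_one.mp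
        (hωord ▸ dvd_trans (Nat.gcd_dvd_right r s) hsv)
      rw [← Units.val_pow_eq_pow_val, h1, Units.val_one]
    have hfω : ((ω : F)) ^ r * eval (((ω : F)) ^ v) h
        = (1 : F) ^ r * eval ((1 : F) ^ v) h := by
      rw [hωr, hωv, one_pow, one_pow]
    have hω1 : ω = 1 := Units.ext (by rw [Units.val_one]; exact hinj hfω)
    rw [← hωord, hω1, orderOf_one]
  -- ## bijectivity forces gcd (M₁, d) = 1
  have hgcdM_of_bij : (∀ η : F, η ^ d = 1 → eval η h ≠ 0) →
      Function.Bijective (fun c : F => c ^ r * eval (c ^ v) h) →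
      Nat.gcd (r + (d - (c₀ * e) % d)) d = 1 := by
    intro hNV hbij
    have hM₁pos : 0 < r + (d - (c₀ * e) % d) := by omega
    have hfilter : (Finset.univ.filter fun c : F => (c ^ r * eval (c ^ v) h) ^ s = 1)
        = Finset.univ.filter fun c : F => c ^ (s * (r + (d - (c₀ * e) % d))) = 1 := by
      ext c
      simp only [Finset.mem_filter, Finset.mem_univ, true_and]
      by_cases hc : c = 0
      · subst hc
        rw [hf0, zero_pow hspos.ne', zero_pow (Nat.mul_pos hspos hM₁pos).ne']
      · rw [fkey hNV c hc]
    have hcard1 : (Finset.univ.filter fun c : F => (c ^ r * eval (c ^ v) h) ^ s = 1).card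
        = (Finset.univ.filter fun y : F => y ^ s = 1).card := by
      apply Finset.card_bij (fun c _ => c ^ r * eval (c ^ v) h)
      · intro c hc
        rw [Finset.mem_filter] at hc ⊢
        exact ⟨Finset.mem_univ _, hc.2⟩
      · intro c1 _ c2 _ h12
        exact hbij.injective h12
      · intro b hb
        obtain ⟨c, hcb⟩ := hbij.surjective b
        refine ⟨c, ?_, hcb⟩
        rw [Finset.mem_filter] at hb ⊢
        refine ⟨Finset.mem_univ _, ?_⟩
        simp only at hcb
        rw [hcb]
        exact hb.2
    have hc1 := aux_count (F := F) (s * (r + (d - (c₀ * e) % d)))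
      (Nat.mul_pos hspos hM₁pos)
    have hc2 := aux_count (F := F) s hspos
    rw [hq] at hc1 hc2
    have hgs : Nat.gcd s (q - 1) = s := Nat.gcd_eq_left hsdvd
    have hEq : Nat.gcd (s * (r + (d - (c₀ * e) % d))) (q - 1) = s := by
      rw [← hc1, ← hfilter, hcard1, hc2, hgs]
    rw [← hsd, Nat.gcd_mul_left] at hEq
    exact Nat.eq_of_mul_eq_mul_left hspos (by rw [hEq, mul_one])
  -- ## converse: the gcd conditions give injectivity
  have hinj_of : Nat.gcd r s = 1 → Nat.gcd (r + (d - (c₀ * e) % d)) d = 1 →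
      (∀ η : F, η ^ d = 1 → eval η h ≠ 0) →
      Function.Injective (fun c : F => c ^ r * eval (c ^ v) h) := by
    intro hrs hMd hNV a b hab
    simp only at hab
    have hfne : ∀ c : F, c ≠ 0 → c ^ r * eval (c ^ v) h ≠ 0 := fun c hc =>
      mul_ne_zero (pow_ne_zero _ hc) (hNV _ (hvd1 c hc))
    by_cases ha : a = 0
    · by_cases hb : b = 0
      · rw [ha, hb]
      · exfalso
        rw [ha, hf0] at hab
        exact hfne b hb hab.symm
    · by_cases hb : b = 0
      · exfalso
        rw [hb, hf0] at hab
        exact hfne a ha hab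
      · set un := (Units.mk0 a ha)⁻¹ * Units.mk0 b hb with hundef
        have hcoe : ∀ n : ℕ, a ^ n = b ^ n → un ^ n = 1 := by
          intro n hn
          apply Units.ext
          rw [Units.val_pow_eq_pow_val, Units.val_one, hundef, Units.val_mul,
            Units.val_inv_eq_inv_val, mul_pow, inv_pow]
          show ((a : F) ^ n)⁻¹ * (b : F) ^ n = 1
          rw [← hn, inv_mul_cancel₀ (pow_ne_zero _ ha)]
        have hcoe' : ∀ n : ℕ, un ^ n = 1 → a ^ n = b ^ n := by
          intro n hn
          have h1 := congrArg Units.val hn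
          rw [Units.val_pow_eq_pow_val, Units.val_one, hundef, Units.val_mul,
            Units.val_inv_eq_inv_val, mul_pow, inv_pow] at h1
          exact (inv_mul_eq_one₀ (pow_ne_zero _ ha)).mp h1
        have h1 : a ^ (s * (r + (d - (c₀ * e) % d)))
            = b ^ (s * (r + (d - (c₀ * e) % d))) := by
          rw [← fkey hNV a ha, ← fkey hNV b hb, hab]
        have h2 : orderOf un ∣ s * (r + (d - (c₀ * e) % d)) :=
          orderOf_dvd_iff_pow_eq_one.mpr (hcoe _ h1)
        have h3 : orderOf un ∣ q - 1 := by
          apply orderOf_dvd_iff_pow_eq_one.mpr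
          rw [← hq, ← Fintype.card_units (α := F)]
          exact pow_card_eq_one
        have h4 : orderOf un ∣ s := by
          have h5 := Nat.dvd_gcd h2 h3
          rw [← hsd, Nat.gcd_comm (s * (r + (d - (c₀ * e) % d))) (s * d),
            Nat.gcd_mul_left, Nat.gcd_comm d, hMd, mul_one] at h5
          exact h5
        have h5 : a ^ s = b ^ s := hcoe' _ (orderOf_dvd_iff_pow_eq_one.mp h4)
        have h6 : a ^ v = b ^ v := by rw [hv_es, pow_mul, pow_mul, h5]
        have h7 : a ^ r = b ^ r := by
          have h9 : eval (a ^ v) h ≠ 0 := hNV _ (hvd1 a ha)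
          apply mul_right_cancel₀ h9
          rw [hab, h6]
        have h10 : orderOf un ∣ Nat.gcd r s :=
          Nat.dvd_gcd (orderOf_dvd_iff_pow_eq_one.mpr (hcoe _ h7)) h4
        rw [hrs] at h10
        have h11 : un = 1 := orderOf_eq_one_iff.mp (Nat.dvd_one.mp h10)
        have h12 := hcoe' 1 (by rw [pow_one, h11])
        rwa [pow_one, pow_one] at h12
  -- ## the numerical equivalence of the two gcd conditions
  have hNT : (∀ η : F, η ^ d = 1 → eval η h ≠ 0) →
      (Nat.gcd (2 * r + (k - 1) * t * v) (2 * d) = 2 ↔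
        Nat.gcd (r + (d - (c₀ * e) % d)) d = 1) := by
    intro hNV
    have hpar : Even ((k - 1) * (t * (e * (S * (j * j))))) := by
      rcases Nat.even_or_odd k with hke | hko
      swap
      · exact (Nat.Odd.sub_odd hko odd_one).mul_right _
      rcases Nat.eq_zero_or_pos t with rfl | ht
      · simp
      rcases Nat.even_or_odd q with hqe | hqo
      · exfalso
        have hp2 : p = 2 := by
          have h2 : (2 : ℕ) ∣ p ^ (nn : ℕ) := by rw [← hq_pn]; exact hqe.two_dvd
          exact ((Nat.prime_dvd_prime_iff_eq Nat.prime_two hpprime).mp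
            (Nat.Prime.dvd_of_dvd_pow Nat.prime_two h2)).symm
        have hk0 : (k : F) = 0 := by
          rw [CharP.cast_eq_zero_iff F p k, hp2]
          exact hke.two_dvd
        apply hNV 1 (one_pow d)
        rw [heval 1]
        have hsum1 : (∑ i ∈ Finset.range k, (1 : F) ^ i) = (k : F) := by simp
        rw [hsum1, hk0, zero_pow ht.ne', zero_mul]
      rcases Nat.even_or_odd d with hde | hdo
      · exfalso
        apply hNV (-1) hde.neg_one_pow
        rw [heval (-1)]
        have hsum2 : (∑ i ∈ Finset.range k, (-1 : F) ^ i) = 0 := by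
          rw [neg_one_geom_sum, if_pos hke]
        rw [hsum2, zero_pow ht.ne', zero_mul]
      · have hq0odd : Odd q0 := by
          rcases Nat.even_or_odd q0 with hq0e | hh
          · exact absurd (hqm ▸ (Nat.even_pow.mpr ⟨hq0e, hm0⟩))
              (Nat.not_even_iff_odd.mpr hqo)
          · exact hh
        have hjeven : Even j := by
          have h1 : Even (d * j) := by rw [← hj]; exact hq0odd.add_one
          rcases Nat.even_mul.mp h1 with hh | hh
          · exact absurd hh (Nat.not_even_iff_odd.mpr hdo)
          · exact hh
        exact ((((hjeven.mul_right j).mul_left S).mul_left e).mul_left t).mul_left _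
    obtain ⟨cc, hcc⟩ := hpar
    set c₁ := (c₀ * e) % d with hc₁n
    set A' := c₀ * e / d with hA'n
    have hc1lt : c₁ < d := by rw [hc₁n]; exact Nat.mod_lt _ hdpos
    have h5 : d * A' + c₁ = c₀ * e := by rw [hA'n, hc₁n]; exact Nat.div_add_mod _ _
    have h5z : (d : ℤ) * (A' : ℤ) + (c₁ : ℤ) = (c₀ : ℤ) * (e : ℤ) := by exact_mod_cast h5
    have hvz : ((v : ℕ) : ℤ) = (s : ℤ) * (e : ℤ) := by exact_mod_cast hv_es
    have hsz : (s : ℤ) = ((q0 : ℤ) - 1) * ((j : ℤ) * (S : ℤ)) := by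
      rw [hs_eq]
      push_cast [Nat.cast_sub (show 1 ≤ q0 by omega)]
      ring
    have hjz : (q0 : ℤ) + 1 = (d : ℤ) * (j : ℤ) := by exact_mod_cast hj
    have hc₀z : ((c₀ : ℕ) : ℤ) = ((k : ℤ) - 1) * ((t : ℤ) * ((j : ℤ) * (S : ℤ))) := by
      rw [hc₀]
      push_cast [Nat.cast_sub (show 1 ≤ k by omega)]
      ring
    have hccz : ((k : ℤ) - 1) * ((t : ℤ) * ((e : ℤ) * ((S : ℤ) * ((j : ℤ) * (j : ℤ)))))
        = (cc : ℤ) + (cc : ℤ) := by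
      zify [show 1 ≤ k by omega] at hcc
      linear_combination hcc
    have hM1z : ((r + (d - c₁) : ℕ) : ℤ) = (r : ℤ) + (d : ℤ) - (c₁ : ℤ) := by
      push_cast [Nat.cast_sub (le_of_lt hc1lt)]
      ring
    have hkz : ((2 * r + (k - 1) * t * v : ℕ) : ℤ)
        = 2 * (r : ℤ) + ((k : ℤ) - 1) * (t : ℤ) * (v : ℤ) := by
      push_cast [Nat.cast_sub (show 1 ≤ k by omega)]
      ring
    have hkey : ((2 * r + (k - 1) * t * v : ℕ) : ℤ)
        = 2 * ((r + (d - c₁) : ℕ) : ℤ)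
          + 2 * (d : ℤ) * ((cc : ℤ) - (A' : ℤ) - 1) := by
      rw [hkz, hM1z]
      linear_combination ((k : ℤ) - 1) * (t : ℤ) * hvz
        + ((k : ℤ) - 1) * (t : ℤ) * (e : ℤ) * hsz
        + ((k : ℤ) - 1) * (t : ℤ) * (e : ℤ) * (S : ℤ) * (j : ℤ) * hjz
        + (d : ℤ) * hccz + 2 * (e : ℤ) * hc₀z + 2 * h5z
    have hXY : ∃ X Y : ℕ, (2 * r + (k - 1) * t * v) + X * (2 * d)
        = 2 * (r + (d - c₁)) + Y * (2 * d) := by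
      set z : ℤ := (cc : ℤ) - (A' : ℤ) - 1 with hzd
      rcases le_or_gt 0 z with hz0 | hz0
      · refine ⟨0, z.toNat, ?_⟩
        have hzz : ((z.toNat : ℕ) : ℤ) = z := Int.toNat_of_nonneg hz0
        have hfin : ((2 * r + (k - 1) * t * v : ℕ) : ℤ) + (0 : ℕ) * (2 * (d : ℤ))
            = 2 * ((r + (d - c₁) : ℕ) : ℤ) + (z.toNat : ℤ) * (2 * (d : ℤ)) := by
          rw [hzz]
          simp only [Nat.cast_zero, zero_mul, add_zero]
          linarith [hkey]
        exact_mod_cast hfin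
      · refine ⟨(-z).toNat, 0, ?_⟩
        have hzz : (((-z).toNat : ℕ) : ℤ) = -z := Int.toNat_of_nonneg (by linarith)
        have hfin : ((2 * r + (k - 1) * t * v : ℕ) : ℤ) + ((-z).toNat : ℤ) * (2 * (d : ℤ))
            = 2 * ((r + (d - c₁) : ℕ) : ℤ) + (0 : ℕ) * (2 * (d : ℤ)) := by
          rw [hzz]
          simp only [Nat.cast_zero, zero_mul, add_zero]
          linarith [hkey]
        exact_mod_cast hfin
    obtain ⟨X, Y, hXY⟩ := hXY
    have hgcd2 : Nat.gcd (2 * r + (k - 1) * t * v) (2 * d)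
        = Nat.gcd (2 * (r + (d - c₁))) (2 * d) := by
      calc Nat.gcd (2 * r + (k - 1) * t * v) (2 * d)
          = Nat.gcd ((2 * r + (k - 1) * t * v) + X * (2 * d)) (2 * d) :=
            (Nat.gcd_add_mul_right_left (2 * d) (2 * r + (k - 1) * t * v) X).symm
        _ = Nat.gcd ((2 * (r + (d - c₁))) + Y * (2 * d)) (2 * d) := by rw [hXY]
        _ = Nat.gcd (2 * (r + (d - c₁))) (2 * d) :=
            Nat.gcd_add_mul_right_left (2 * d) (2 * (r + (d - c₁))) Y
    rw [hgcd2, Nat.gcd_mul_left]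
    omega
  -- ## assembly
  rw [hfeq, htrans]
  constructor
  · intro hbij
    have hNV := hNV_of_bij hbij
    exact ⟨hgcd_rs_of_inj hbij.injective, (hNT hNV).mpr (hgcdM_of_bij hNV hbij), hNV⟩
  · rintro ⟨h1, h2, h3⟩
    exact Finite.injective_iff_bijective.mp (hinj_of h1 ((hNT h3).mp h2) h3)
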